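/- For any integer A ≥ 2 and any m ≥ 1, let σ be the shift on 𝒜^ℕ where #𝒜 = A, and σ'' the shift on (Δ_{A^m})^ℕ. Then the map f_m: (Δ_{A^m})^ℕ → M(𝒜^ℕ) sending (a_n)_{n∈ℕ} to the push-forward under the block-identification π: (𝒜^m)^ℕ ≅ 𝒜^ℕ of the product measure μ_{a_1} × μ_{a_2} × ⋯ is a continuous injective map satisfying f_m ∘ σ'' = σ_*^m ∘ f_m. -/

import Mathlib

set_option linter.unusedSectionVars false

open MeasureTheory Set TopologicalSpace
open scoped ENNReal NNReal

namespace BSE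

variable {S : Type} [Fintype S] [Nonempty S] [TopologicalSpace S] [DiscreteTopology S]
  [MeasurableSpace S] [DiscreteMeasurableSpace S] [BorelSpace S]

/-- Cylinder set: sequences agreeing with `x` below `n`. -/
def cyl (n : ℕ) (x : ℕ → S) : Set (ℕ → S) := {y | ∀ k < n, y k = x k}

lemma self_mem_cyl (n : ℕ) (x : ℕ → S) : x ∈ cyl n x := fun _ _ => rfl

lemma isClopen_cyl (n : ℕ) (x : ℕ → S) : IsClopen (cyl (S := S) n x) := by
  have : cyl (S := S) n x = ⋂ k ∈ Finset.range n, (fun y => y k) ⁻¹' {x k} := by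
    ext y; simp [cyl]
  rw [this]
  exact isClopen_biInter_finset fun k _ =>
    (isClopen_discrete _).preimage (continuous_apply k)

lemma measurableSet_cyl (n : ℕ) (x : ℕ → S) : MeasurableSet (cyl (S := S) n x) :=
  (isClopen_cyl n x).isClosed.measurableSet

lemma isCompact_cyl (n : ℕ) (x : ℕ → S) : IsCompact (cyl (S := S) n x) :=
  (isClopen_cyl n x).isClosed.isCompact

lemma cyl_zero (x : ℕ → S) : cyl 0 x = univ := by
  ext y; simp [cyl]

lemma cyl_mono {n n' : ℕ} (h : n ≤ n') (x : ℕ → S) : cyl n' x ⊆ cyl n x :=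
  fun _ hy k hk => hy k (lt_of_lt_of_le hk h)

lemma cyl_congr {n : ℕ} {x x' : ℕ → S} (h : ∀ k < n, x k = x' k) : cyl n x = cyl n x' := by
  ext y; constructor <;> intro hy k hk
  · rw [hy k hk, h k hk]
  · rw [hy k hk, h k hk]

lemma cyl_inter_of_le {n n' : ℕ} (h : n ≤ n') {x x' : ℕ → S}
    (hne : (cyl n x ∩ cyl n' x').Nonempty) : cyl n x ∩ cyl n' x' = cyl n' x' := by
  obtain ⟨y, hy1, hy2⟩ := hne
  refine Set.inter_eq_self_of_subset_right fun z hz k hk => ?_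
  rw [hz k (lt_of_lt_of_le hk h), ← hy2 k (lt_of_lt_of_le hk h), hy1 k hk]

/-- Extension of a finite word by a default value. -/
noncomputable def ext (n : ℕ) (w : Fin n → S) : ℕ → S :=
  fun k => if h : k < n then w ⟨k, h⟩ else Classical.arbitrary S

lemma ext_lt {n : ℕ} (w : Fin n → S) {k : ℕ} (h : k < n) : ext n w k = w ⟨k, h⟩ := dif_pos h

lemma ext_ge {n : ℕ} (w : Fin n → S) {k : ℕ} (h : ¬ k < n) :
    ext n w k = Classical.arbitrary S := dif_neg h

/-- Restriction of a sequence to a word of length `n`. -/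
def restr (n : ℕ) (x : ℕ → S) : Fin n → S := fun j => x j

lemma mem_cyl_ext_iff {n : ℕ} {w : Fin n → S} {y : ℕ → S} :
    y ∈ cyl n (ext n w) ↔ restr n y = w := by
  constructor
  · intro hy; funext j; exact (hy j j.isLt).trans (ext_lt w j.isLt)
  · intro hy k hk
    rw [ext_lt w hk, ← hy]; rfl

/-- The diagonal cluster point lemma: if a sequence of pairs, with the two components of
the `n`-th pair agreeing below `n`, lies in a closed set `C`, then `C` contains a diagonal
point. -/
lemma exists_diag_mem {C : Set ((ℕ → S) × (ℕ → S))} (hC : IsClosed C)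
    (t : ℕ → (ℕ → S) × (ℕ → S)) (htC : ∀ n, t n ∈ C)
    (hagree : ∀ n, ∀ k < n, (t n).1 k = (t n).2 k) : ∃ z, (z, z) ∈ C := by
  have hne : (Filter.map t Filter.atTop).NeBot := Filter.map_neBot
  obtain ⟨p, -, hp⟩ := (isCompact_univ (X := (ℕ → S) × (ℕ → S))).exists_clusterPt
    (f := Filter.map t Filter.atTop) (Filter.le_principal_iff.mpr Filter.univ_mem)
  have hmem : ∀ D : Set ((ℕ → S) × (ℕ → S)), IsClosed D → D ∈ Filter.map t Filter.atTop →
      p ∈ D := by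
    intro D hD hDf
    have : ClusterPt p (Filter.principal D) := hp.mono (Filter.le_principal_iff.mpr hDf)
    rwa [← mem_closure_iff_clusterPt, hD.closure_eq] at this
  have hpC : p ∈ C := hmem C hC (Filter.mem_map.mpr (by filter_upwards with n using htC n))
  have heq : p.1 = p.2 := by
    funext k
    have : p ∈ {q : (ℕ → S) × (ℕ → S) | q.1 k = q.2 k} := by
      refine hmem _ (isClosed_eq ((continuous_apply k).comp continuous_fst)
        ((continuous_apply k).comp continuous_snd)) ?_
      rw [Filter.mem_map]
      filter_upwards [Filter.eventually_ge_atTop (k + 1)] with n hn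
      exact hagree n k hn
    exact this
  refine ⟨p.1, ?_⟩
  have : p = (p.1, p.1) := by
    rw [Prod.ext_iff]
    exact ⟨rfl, heq.symm⟩
  rwa [this] at hpC


variable (ν : ℕ → Measure S) [hν : ∀ j, IsProbabilityMeasure (ν j)]

variable (ν : ℕ → Measure S) [hν : ∀ j, IsProbabilityMeasure (ν j)]

/-- Weight of the initial segment of length `n` of `x`. -/
noncomputable def q (n : ℕ) (x : ℕ → S) : ℝ≥0∞ := ∏ j ∈ Finset.range n, ν j {x j}

lemma q_zero (x : ℕ → S) : q ν 0 x = 1 := by simp [q]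

lemma q_succ (n : ℕ) (x : ℕ → S) : q ν (n + 1) x = q ν n x * ν n {x n} :=
  Finset.prod_range_succ _ _

lemma q_congr {n : ℕ} {x x' : ℕ → S} (h : ∀ k < n, x k = x' k) : q ν n x = q ν n x' :=
  Finset.prod_congr rfl fun j hj => by rw [h j (Finset.mem_range.mp hj)]

lemma q_le_one (n : ℕ) (x : ℕ → S) : q ν n x ≤ 1 :=
  Finset.prod_le_one (fun _ _ => zero_le) (fun j _ => prob_le_one)

lemma q_antitone (x : ℕ → S) : Antitone fun n => q ν n x := by
  apply antitone_nat_of_succ_le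
  intro n
  rw [q_succ]
  calc q ν n x * ν n {x n} ≤ q ν n x * 1 := by gcongr; exact prob_le_one
  _ = q ν n x := mul_one _

open scoped Classical in
/-- Finite-level approximation of the outer content of `K`. -/
noncomputable def P (K : Set (ℕ → S)) (n : ℕ) : ℝ≥0∞ :=
  ∑ w : Fin n → S, if (K ∩ cyl n (ext n w)).Nonempty then q ν n (ext n w) else 0

/-- snoc equivalence -/
def snocEquiv (n : ℕ) : ((Fin n → S) × S) ≃ (Fin (n + 1) → S) where
  toFun p := Fin.snoc p.1 p.2
  invFun w := (Fin.init w, w (Fin.last n))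
  left_inv p := by simp [Fin.init_snoc, Fin.snoc_last]
  right_inv w := by simp [Fin.snoc_init_self]

lemma sum_snoc {M : Type*} [AddCommMonoid M] (n : ℕ) (F : (Fin (n + 1) → S) → M) :
    ∑ w : Fin (n + 1) → S, F w = ∑ u : Fin n → S, ∑ s : S, F (Fin.snoc u s) := by
  rw [← Fintype.sum_equiv (snocEquiv (S := S) n) (fun p => F (Fin.snoc p.1 p.2)) F
    (fun p => rfl), Fintype.sum_prod_type]

lemma ext_snoc_lt {n : ℕ} (u : Fin n → S) (s : S) {k : ℕ} (h : k < n) :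
    ext (n + 1) (Fin.snoc u s) k = ext n u k := by
  rw [ext_lt _ (Nat.lt_succ_of_lt h), ext_lt _ h]
  have : (⟨k, Nat.lt_succ_of_lt h⟩ : Fin (n + 1)) = Fin.castSucc ⟨k, h⟩ := rfl
  rw [this, Fin.snoc_castSucc]

lemma ext_snoc_self {n : ℕ} (u : Fin n → S) (s : S) :
    ext (n + 1) (Fin.snoc u s) n = s := by
  rw [ext_lt _ (Nat.lt_succ_self n)]
  have : (⟨n, Nat.lt_succ_self n⟩ : Fin (n + 1)) = Fin.last n := rfl
  rw [this, Fin.snoc_last]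

lemma sum_singleton_eq_one (j : ℕ) : ∑ s : S, ν j {s} = 1 := by
  have h := sum_measure_preimage_singleton (μ := ν j) Finset.univ (f := id)
    (fun y _ => MeasurableSet.of_discrete)
  simpa using h

lemma cyl_snoc_subset {n : ℕ} (u : Fin n → S) (s : S) :
    cyl (n + 1) (ext (n + 1) (Fin.snoc u s)) ⊆ cyl n (ext n u) := by
  intro y hy k hk
  rw [hy k (Nat.lt_succ_of_lt hk), ext_snoc_lt u s hk]

/-- A set is `n`-saturated if membership only depends on coordinates `< n`. -/
def Saturated (n : ℕ) (K : Set (ℕ → S)) : Prop :=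
  ∀ y y', y ∈ K → (∀ k < n, y' k = y k) → y' ∈ K

lemma saturated_mono {n n' : ℕ} (h : n ≤ n') {K : Set (ℕ → S)} (hK : Saturated n K) :
    Saturated n' K := fun y y' hy hagree => hK y y' hy fun k hk => hagree k (lt_of_lt_of_le hk h)

lemma saturated_cyl (n : ℕ) (x : ℕ → S) : Saturated n (cyl (S := S) n x) :=
  fun y y' hy hagree k hk => (hagree k hk).trans (hy k hk)

lemma saturated_univ (n : ℕ) : Saturated n (univ : Set (ℕ → S)) := fun _ _ _ _ => trivial

open scoped Classical in
lemma P_succ_le_aux {K : Set (ℕ → S)} {n : ℕ} (u : Fin n → S) (s : S) :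
    (if (K ∩ cyl (n+1) (ext (n+1) (Fin.snoc u s))).Nonempty
      then q ν (n+1) (ext (n+1) (Fin.snoc u s)) else 0)
    ≤ (if (K ∩ cyl n (ext n u)).Nonempty then q ν n (ext n u) * ν n {s} else 0) := by
  by_cases h : (K ∩ cyl (n+1) (ext (n+1) (Fin.snoc u s))).Nonempty
  · have h' : (K ∩ cyl n (ext n u)).Nonempty :=
      h.mono (inter_subset_inter_right _ (cyl_snoc_subset u s))
    rw [if_pos h, if_pos h', q_succ, q_congr ν (fun k hk => ext_snoc_lt u s hk), ext_snoc_self]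
  · rw [if_neg h]; exact zero_le

open scoped Classical in
lemma P_sum_snoc (K : Set (ℕ → S)) (n : ℕ) :
    ∑ u : Fin n → S, ∑ s : S,
      (if (K ∩ cyl n (ext n u)).Nonempty then q ν n (ext n u) * ν n {s} else 0)
    = P ν K n := by
  rw [P]
  apply Finset.sum_congr rfl
  intro u _
  by_cases h : (K ∩ cyl n (ext n u)).Nonempty
  · simp only [if_pos h]
    rw [← Finset.mul_sum, sum_singleton_eq_one, mul_one]
  · simp [if_neg h]

open scoped Classical in
lemma P_succ_le (K : Set (ℕ → S)) (n : ℕ) : P ν K (n + 1) ≤ P ν K n := by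
  rw [P, sum_snoc]
  rw [← P_sum_snoc ν K n]
  gcongr with u _ s _
  exact P_succ_le_aux ν u s

lemma P_antitone (K : Set (ℕ → S)) : Antitone (P ν K) :=
  antitone_nat_of_succ_le fun n => P_succ_le ν K n

open scoped Classical in
lemma P_succ_eq_of_saturated {K : Set (ℕ → S)} {n : ℕ} (hK : Saturated n K) :
    P ν K (n + 1) = P ν K n := by
  rw [P, sum_snoc, ← P_sum_snoc ν K n]
  apply Finset.sum_congr rfl
  intro u _
  apply Finset.sum_congr rfl
  intro s _
  have hiff : (K ∩ cyl (n+1) (ext (n+1) (Fin.snoc u s))).Nonempty ↔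
      (K ∩ cyl n (ext n u)).Nonempty := by
    constructor
    · exact fun h => h.mono (inter_subset_inter_right _ (cyl_snoc_subset u s))
    · rintro ⟨y, hyK, hyc⟩
      refine ⟨fun k => if k < n then y k else ext (n+1) (Fin.snoc u s) k, ?_, ?_⟩
      · exact hK y _ hyK fun k hk => if_pos hk
      · intro k hk
        show (if k < n then y k else ext (n + 1) (Fin.snoc u s) k) = ext (n + 1) (Fin.snoc u s) k
        by_cases h' : k < n
        · rw [if_pos h', hyc k h', ← ext_snoc_lt u s h']
        · rw [if_neg h']
    
  by_cases h : (K ∩ cyl n (ext n u)).Nonempty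
  · rw [if_pos (hiff.mpr h), if_pos h, q_succ,
      q_congr ν (fun k hk => ext_snoc_lt u s hk), ext_snoc_self]
  · rw [if_neg (fun hc => h (hiff.mp hc)), if_neg h]

open scoped Classical in
lemma P_eq_of_saturated {K : Set (ℕ → S)} {n : ℕ} (hK : Saturated n K) {n' : ℕ} (h : n ≤ n') :
    P ν K n' = P ν K n := by
  induction n' with
  | zero => cases Nat.le_zero.mp h; rfl
  | succ k ih =>
    rcases Nat.lt_or_ge n (k+1) with h' | h'
    · have hk : n ≤ k := Nat.lt_succ_iff.mp h'
      rw [P_succ_eq_of_saturated ν (saturated_mono hk hK), ih hk]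
    · have : n = k + 1 := le_antisymm h h'
      subst this; rfl

open scoped Classical in
lemma P_cyl_self (n : ℕ) (x : ℕ → S) : P ν (cyl n x) n = q ν n x := by
  rw [P]
  rw [Finset.sum_eq_single (restr n x)]
  · have hc : cyl n (ext n (restr n x)) = cyl n x :=
      cyl_congr fun k hk => ext_lt (restr n x) hk
    rw [hc]
    have : (cyl n x ∩ cyl n x).Nonempty := ⟨x, self_mem_cyl n x, self_mem_cyl n x⟩
    rw [if_pos this]
    exact q_congr ν fun k hk => ext_lt (restr n x) hk
  · intro w _ hw
    rw [if_neg]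
    rintro ⟨y, hy1, hy2⟩
    apply hw
    funext j
    rw [← mem_cyl_ext_iff.mp hy2]
    show y j = x j
    exact hy1 j j.isLt
  · intro h
    exact absurd (Finset.mem_univ _) h

/-- The content function. -/
noncomputable def lam (K : Set (ℕ → S)) : ℝ≥0∞ := ⨅ n, P ν K n

lemma lam_le_P (K : Set (ℕ → S)) (n : ℕ) : lam ν K ≤ P ν K n := iInf_le _ n

open scoped Classical in
lemma P_le_one (K : Set (ℕ → S)) : P ν K 0 ≤ 1 := by
  rw [P]
  have : (Finset.univ : Finset (Fin 0 → S)) = {(fun j => j.elim0)} := by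
    apply Finset.eq_singleton_iff_unique_mem.mpr
    exact ⟨Finset.mem_univ _, fun w _ => funext fun j => j.elim0⟩
  rw [this, Finset.sum_singleton]
  split_ifs
  · exact q_le_one ν 0 _
  · exact zero_le_one

lemma lam_le_one (K : Set (ℕ → S)) : lam ν K ≤ 1 := (lam_le_P ν K 0).trans (P_le_one ν K)

lemma lam_ne_top (K : Set (ℕ → S)) : lam ν K ≠ ⊤ :=
  ((lam_le_one ν K).trans_lt ENNReal.one_lt_top).ne

lemma lam_mono {K K' : Set (ℕ → S)} (h : K ⊆ K') : lam ν K ≤ lam ν K' := by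
  apply iInf_mono
  intro n
  classical
  rw [P, P]
  apply Finset.sum_le_sum
  intro w _
  by_cases h1 : (K ∩ cyl n (ext n w)).Nonempty
  · rw [if_pos h1, if_pos (h1.mono (inter_subset_inter_left _ h))]
  · rw [if_neg h1]; exact zero_le

lemma lam_cyl (n : ℕ) (x : ℕ → S) : lam ν (cyl n x) = q ν n x := by
  apply le_antisymm
  · rw [← P_cyl_self ν n x]; exact lam_le_P ν _ n
  · apply le_iInf
    intro j
    classical
    rcases le_total j n with h | h
    · calc q ν n x ≤ q ν j x := q_antitone ν x h
        _ = q ν j (ext j (restr j x)) := q_congr ν fun k hk => (ext_lt (restr j x) hk).symm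
        _ ≤ P ν (cyl n x) j := by
            rw [P]
            have hm : (cyl n x ∩ cyl j (ext j (restr j x))).Nonempty :=
              ⟨x, self_mem_cyl n x, mem_cyl_ext_iff.mpr rfl⟩
            have hs := Finset.single_le_sum (f := fun w : Fin j → S =>
              if (cyl n x ∩ cyl j (ext j w)).Nonempty then q ν j (ext j w) else 0)
              (fun _ _ => zero_le) (Finset.mem_univ (restr j x))
            simpa [if_pos hm] using hs
    · rw [P_eq_of_saturated ν (saturated_cyl n x) h, P_cyl_self]

lemma lam_univ : lam ν (univ : Set (ℕ → S)) = 1 := by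
  have h0 : P ν (univ : Set (ℕ → S)) 0 = 1 := by
    classical
    rw [P]
    have huniq : (Finset.univ : Finset (Fin 0 → S)) = {(fun j => j.elim0)} := by
      apply Finset.eq_singleton_iff_unique_mem.mpr
      exact ⟨Finset.mem_univ _, fun w _ => funext fun j => j.elim0⟩
    rw [huniq, Finset.sum_singleton]
    have hne : ((univ : Set (ℕ → S)) ∩ cyl 0 (ext 0 fun j => j.elim0)).Nonempty :=
      ⟨ext 0 fun j => j.elim0, mem_inter (mem_univ _) (self_mem_cyl 0 _)⟩
    rw [if_pos hne, q_zero]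
  have : ∀ n, P ν (univ : Set (ℕ → S)) n = 1 := fun n => by
    rw [P_eq_of_saturated ν (saturated_univ 0) (Nat.zero_le n), h0]
  simp [lam, this]



lemma cyl_ext_restrict {n N : ℕ} (h : N ≤ n) (w : Fin n → S) :
    cyl n (ext n w) ⊆ cyl N (ext N (fun j => w (Fin.castLE h j))) := by
  intro y hy k hk
  rw [hy k (lt_of_lt_of_le hk h), ext_lt w (lt_of_lt_of_le hk h), ext_lt _ hk]
  rfl

/-- Disjoint closed sets are separated at some cylinder level. -/
lemma exists_separation_level {K K' : Set (ℕ → S)} (hK : IsClosed K) (hK' : IsClosed K')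
    (hd : Disjoint K K') :
    ∃ N, ∀ n ≥ N, ∀ w : Fin n → S,
      ¬ ((K ∩ cyl n (ext n w)).Nonempty ∧ (K' ∩ cyl n (ext n w)).Nonempty) := by
  by_contra hcon
  push_neg at hcon
  -- first reduce: if no level works, then at each level N there is a bad word of length N
  have hbad : ∀ N : ℕ, ∃ w : Fin N → S,
      (K ∩ cyl N (ext N w)).Nonempty ∧ (K' ∩ cyl N (ext N w)).Nonempty := by
    intro N
    obtain ⟨n, hn, w, hw1, hw2⟩ := hcon N
    exact ⟨fun j => w (Fin.castLE hn j),
      hw1.mono (inter_subset_inter_right _ (cyl_ext_restrict hn w)),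
      hw2.mono (inter_subset_inter_right _ (cyl_ext_restrict hn w))⟩
  choose w hw1 hw2 using hbad
  choose x hxK hxc using hw1
  choose y hyK hyc using hw2
  obtain ⟨z, hz⟩ := exists_diag_mem (hK.prod hK') (fun n => (x n, y n))
    (fun n => ⟨hxK n, hyK n⟩)
    (fun n k hk => by
      show x n k = y n k
      rw [hxc n k hk, hyc n k hk])
  exact absurd rfl (hd.ne_of_mem hz.1 hz.2)

open scoped Classical in
lemma P_add_of_separated {K K' : Set (ℕ → S)} {n : ℕ}
    (h : ∀ w : Fin n → S,
      ¬ ((K ∩ cyl n (ext n w)).Nonempty ∧ (K' ∩ cyl n (ext n w)).Nonempty)) :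
    P ν (K ∪ K') n = P ν K n + P ν K' n := by
  rw [P, P, P, ← Finset.sum_add_distrib]
  apply Finset.sum_congr rfl
  intro u _
  have hun : ((K ∪ K') ∩ cyl n (ext n u)).Nonempty ↔
      (K ∩ cyl n (ext n u)).Nonempty ∨ (K' ∩ cyl n (ext n u)).Nonempty := by
    rw [union_inter_distrib_right, union_nonempty]
  by_cases h1 : (K ∩ cyl n (ext n u)).Nonempty
  · have h2 : ¬ (K' ∩ cyl n (ext n u)).Nonempty := fun h2 => h u ⟨h1, h2⟩
    rw [if_pos (hun.mpr (Or.inl h1)), if_pos h1, if_neg h2, add_zero]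
  · by_cases h2 : (K' ∩ cyl n (ext n u)).Nonempty
    · rw [if_pos (hun.mpr (Or.inr h2)), if_neg h1, if_pos h2, zero_add]
    · rw [if_neg (fun hc => (hun.mp hc).elim h1 h2), if_neg h1, if_neg h2, add_zero]

lemma iInf_tail {f : ℕ → ℝ≥0∞} (hf : Antitone f) (N : ℕ) : ⨅ n, f (N + n) = ⨅ n, f n := by
  apply le_antisymm
  · exact le_iInf fun n => iInf_le_of_le n (hf (Nat.le_add_left n N))
  · exact le_iInf fun n => iInf_le_of_le (N + n) le_rfl

lemma lam_add_of_separated {K K' : Set (ℕ → S)} (hK : IsClosed K) (hK' : IsClosed K')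
    (hd : Disjoint K K') : lam ν (K ∪ K') = lam ν K + lam ν K' := by
  obtain ⟨N, hN⟩ := exists_separation_level hK hK' hd
  have h1 : lam ν (K ∪ K') = ⨅ n, P ν (K ∪ K') (N + n) :=
    (iInf_tail (P_antitone ν _) N).symm
  have h2 : ∀ n, P ν (K ∪ K') (N + n) = P ν K (N + n) + P ν K' (N + n) := fun n =>
    P_add_of_separated ν (hN (N + n) (Nat.le_add_right N n))
  rw [h1]
  simp_rw [h2]
  rw [lam, lam, ← iInf_tail (P_antitone ν K) N, ← iInf_tail (P_antitone ν K') N,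
    ENNReal.iInf_add_iInf (f := fun n => P ν K (N + n)) (g := fun n => P ν K' (N + n))
    (fun i j => ⟨max i j, add_le_add
      (P_antitone ν K (Nat.add_le_add_left (le_max_left i j) N))
      (P_antitone ν K' (Nat.add_le_add_left (le_max_right i j) N))⟩)]

lemma lam_union_le (K K' : Set (ℕ → S)) : lam ν (K ∪ K') ≤ lam ν K + lam ν K' := by
  classical
  have hadd := ENNReal.iInf_add_iInf (f := P ν K) (g := P ν K')
    (fun i j => ⟨max i j, add_le_add
      (P_antitone ν K (le_max_left i j)) (P_antitone ν K' (le_max_right i j))⟩)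
  rw [lam, lam, lam, hadd]
  apply iInf_mono
  intro n
  rw [P, P, P, ← Finset.sum_add_distrib]
  apply Finset.sum_le_sum
  intro u _
  have hun : ((K ∪ K') ∩ cyl n (ext n u)).Nonempty ↔
      (K ∩ cyl n (ext n u)).Nonempty ∨ (K' ∩ cyl n (ext n u)).Nonempty := by
    rw [union_inter_distrib_right, union_nonempty]
  by_cases hc : ((K ∪ K') ∩ cyl n (ext n u)).Nonempty
  · rw [if_pos hc]
    rcases hun.mp hc with h1 | h2
    · rw [if_pos h1]; exact le_add_right le_rfl
    · rw [if_pos h2]; exact le_add_left le_rfl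
  · rw [if_neg hc]; exact zero_le

/-- The content on compact subsets of `ℕ → S`. -/
noncomputable def con : Content (ℕ → S) where
  toFun K := (lam ν K).toNNReal
  mono' K₁ K₂ h := ENNReal.toNNReal_mono (lam_ne_top ν _) (lam_mono ν h)
  sup_disjoint' K₁ K₂ hd h₁ h₂ := by
    show (lam ν (↑K₁ ∪ ↑K₂)).toNNReal = _
    rw [lam_add_of_separated ν h₁ h₂ hd,
      ENNReal.toNNReal_add (lam_ne_top ν _) (lam_ne_top ν _)]
  sup_le' K₁ K₂ := by
    show (lam ν (↑K₁ ∪ ↑K₂)).toNNReal ≤ _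
    rw [← ENNReal.toNNReal_add (lam_ne_top ν _) (lam_ne_top ν _)]
    exact ENNReal.toNNReal_mono
      (ENNReal.add_ne_top.mpr ⟨lam_ne_top ν _, lam_ne_top ν _⟩) (lam_union_le ν _ _)

lemma con_apply (K : Compacts (ℕ → S)) : (((con ν).toFun K : ℝ≥0) : ℝ≥0∞) = lam ν K :=
  ENNReal.coe_toNNReal (lam_ne_top ν _)

/-- The infinite product measure on `ℕ → S`. -/
noncomputable def prodM : Measure (ℕ → S) := (con ν).measure

set_option maxHeartbeats 1000000 in
lemma prodM_clopen {C : Set (ℕ → S)} (hC : IsClopen C) :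
    prodM ν C = lam ν C := by
  rw [prodM, Content.measure_apply _ hC.isClosed.measurableSet,
    Content.outerMeasure_of_isOpen _ _ hC.isOpen]
  apply le_antisymm
  · refine iSup_le fun K => iSup_le fun hK => ?_
    show (((con ν).toFun K : ℝ≥0) : ℝ≥0∞) ≤ _
    rw [con_apply]
    exact lam_mono ν hK
  · have hcompact : IsCompact C := hC.isClosed.isCompact
    calc lam ν C = (((con ν).toFun ⟨C, hcompact⟩ : ℝ≥0) : ℝ≥0∞) := (con_apply ν (⟨C, hcompact⟩ : Compacts (ℕ → S))).symm
      _ ≤ _ := le_iSup₂ (f := fun (K : Compacts (ℕ → S)) (_ : (K : Set (ℕ → S)) ⊆ C) =>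
          (((con ν).toFun K : ℝ≥0) : ℝ≥0∞)) (⟨C, hcompact⟩ : Compacts (ℕ → S)) subset_rfl

lemma prodM_cyl (n : ℕ) (x : ℕ → S) : prodM ν (cyl n x) = q ν n x := by
  rw [prodM_clopen ν (isClopen_cyl n x), lam_cyl]

lemma prodM_univ : prodM ν univ = 1 := by
  rw [prodM_clopen ν isClopen_univ, lam_univ]

instance : IsProbabilityMeasure (prodM ν) := ⟨prodM_univ ν⟩

/-- Cylinders at a cofinal set of levels generate the σ-algebra and form a π-system,
so probability measures agreeing on them are equal. -/
lemma measure_ext_cyl {μ μ' : Measure (ℕ → S)} [IsProbabilityMeasure μ]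
    [IsProbabilityMeasure μ'] (φ : ℕ → ℕ) (hφ : ∀ k, ∃ N, k ≤ φ N)
    (h : ∀ N (x : ℕ → S), μ (cyl (φ N) x) = μ' (cyl (φ N) x)) : μ = μ' := by
  classical
  set C : Set (Set (ℕ → S)) := {t | ∃ N x, t = cyl (φ N) x} with hC
  have hgen : (inferInstance : MeasurableSpace (ℕ → S)) = MeasurableSpace.generateFrom C := by
    apply le_antisymm
    · show MeasurableSpace.pi ≤ _
      rw [MeasurableSpace.pi]
      apply iSup_le
      intro k
      rw [← measurable_iff_comap_le]
      intro t _
      obtain ⟨N, hN⟩ := hφ (k + 1)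
      have : (fun y : ℕ → S => y k) ⁻¹' t =
          ⋃ w ∈ Finset.univ.filter (fun w : Fin (φ N) → S => w ⟨k, hN⟩ ∈ t),
            cyl (φ N) (ext (φ N) w) := by
        ext y
        simp only [mem_preimage, mem_iUnion, Finset.mem_filter, Finset.mem_univ, true_and]
        constructor
        · intro hy
          refine ⟨restr (φ N) y, ?_, mem_cyl_ext_iff.mpr rfl⟩
          show y k ∈ t
          exact hy
        · rintro ⟨w, hw, hyc⟩
          have : y k = w ⟨k, hN⟩ := (hyc k hN).trans (ext_lt w hN)
          rw [this]; exact hw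
      rw [this]
      apply MeasurableSet.biUnion (Finset.countable_toSet _)
      intro w _
      exact MeasurableSpace.measurableSet_generateFrom ⟨N, ext (φ N) w, rfl⟩
    · apply MeasurableSpace.generateFrom_le
      rintro t ⟨N, x, rfl⟩
      exact measurableSet_cyl (φ N) x
  have hpi : IsPiSystem C := by
    rintro t1 ⟨N1, x1, rfl⟩ t2 ⟨N2, x2, rfl⟩ hne
    rcases le_total (φ N1) (φ N2) with hle | hle
    · rw [cyl_inter_of_le hle hne]; exact ⟨N2, x2, rfl⟩
    · rw [inter_comm] at hne ⊢
      rw [cyl_inter_of_le hle hne]; exact ⟨N1, x1, rfl⟩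
  refine ext_of_generate_finite C hgen hpi ?_ (by simp)
  rintro t ⟨N, x, rfl⟩
  exact h N x

section Blocks

variable {A m : ℕ} [NeZero A]

/-- The concatenation homeomorphism `(𝒜^m)^ℕ → 𝒜^ℕ`. -/
def piMap (hm : 0 < m) : (ℕ → (Fin m → Fin A)) → (ℕ → Fin A) :=
  fun x i => x (i / m) ⟨i % m, Nat.mod_lt i hm⟩

lemma piMap_continuous (hm : 0 < m) : Continuous (piMap (A := A) hm) :=
  continuous_pi fun i => (continuous_apply _).comp (continuous_apply (i / m))

lemma piMap_measurable (hm : 0 < m) : Measurable (piMap (A := A) hm) :=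
  (piMap_continuous hm).measurable

lemma piMap_block (hm : 0 < m) (x : ℕ → (Fin m → Fin A)) (j : ℕ) (i : Fin m) :
    piMap hm x (j * m + i) = x j i := by
  have h1 : (j * m + (i : ℕ)) / m = j := by
    rw [mul_comm, Nat.mul_add_div hm, Nat.div_eq_of_lt i.isLt, add_zero]
  have h2 : (j * m + (i : ℕ)) % m = (i : ℕ) := by
    rw [mul_comm, Nat.mul_add_mod, Nat.mod_eq_of_lt i.isLt]
  show piMap hm x (j * m + (i : ℕ)) = x j i
  unfold piMap
  rw [h1]
  congr 1
  exact Fin.ext h2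

lemma piMap_apply (hm : 0 < m) (x : ℕ → (Fin m → Fin A)) (i : ℕ) :
    piMap hm x i = x (i / m) ⟨i % m, Nat.mod_lt i hm⟩ := rfl

/-- The sequence of `m`-blocks of `y`. -/
def blocks (y : ℕ → Fin A) : ℕ → (Fin m → Fin A) := fun j i => y (j * m + i)

lemma piMap_preimage_cyl (hm : 0 < m) (N : ℕ) (y₀ : ℕ → Fin A) :
    piMap hm ⁻¹' (cyl (N * m) y₀) = cyl N (blocks (m := m) y₀) := by
  ext x
  constructor
  · intro hx j hj
    funext i
    have hlt : j * m + (i : ℕ) < N * m := by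
      calc j * m + (i : ℕ) < j * m + m := by omega
        _ = (j + 1) * m := by ring
        _ ≤ N * m := Nat.mul_le_mul_right m hj
    have := hx (j * m + (i : ℕ)) hlt
    rw [piMap_block hm x j i] at this
    exact this
  · intro hx i hi
    have hdiv : i / m < N := Nat.div_lt_iff_lt_mul hm |>.mpr hi
    rw [piMap_apply]
    have hb := congrFun (hx (i / m) hdiv) ⟨i % m, Nat.mod_lt i hm⟩
    rw [hb]
    show y₀ ((i / m) * m + i % m) = y₀ i
    congr 1
    rw [mul_comm]
    exact Nat.div_add_mod i m

/-- The block cylinder set, as in the statement. -/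
def bcylSet (N : ℕ) (c : Fin N → (Fin m → Fin A)) : Set (ℕ → Fin A) :=
  {y : ℕ → Fin A | ∀ (j : Fin N) (i : Fin m), y ((j : ℕ) * m + i) = c j i}

lemma measurableSet_bcylSet (N : ℕ) (c : Fin N → (Fin m → Fin A)) :
    MeasurableSet (bcylSet N c) := by
  have : bcylSet N c = ⋂ (j : Fin N), ⋂ (i : Fin m),
      (fun y : ℕ → Fin A => y ((j : ℕ) * m + i)) ⁻¹' {c j i} := by
    ext y; simp [bcylSet]
  rw [this]
  exact MeasurableSet.iInter fun j => MeasurableSet.iInter fun i =>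
    (measurable_pi_apply _) (MeasurableSet.of_discrete)

lemma piMap_preimage_bcyl (hm : 0 < m) (N : ℕ) (c : Fin N → (Fin m → Fin A)) :
    piMap hm ⁻¹' (bcylSet N c) = cyl N (ext N c) := by
  ext x
  constructor
  · intro hx j hj
    funext i
    rw [ext_lt c hj]
    have := hx ⟨j, hj⟩ i
    rw [piMap_block hm x j i] at this
    exact this
  · intro hx j i
    show piMap hm x ((j : ℕ) * m + i) = c j i
    rw [piMap_block hm x j i, hx j j.isLt, ext_lt c j.isLt]

end Blocks

section FMap

variable {A m : ℕ} [NeZero A]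

/-- The embedding: pushforward of the infinite product measure. -/
noncomputable def fMap (hm : 0 < m) (a : ℕ → ProbabilityMeasure (Fin m → Fin A)) :
    ProbabilityMeasure (ℕ → Fin A) :=
  haveI : ∀ j, IsProbabilityMeasure ((fun j => (a j).toMeasure) j) := fun j => inferInstance
  ⟨(prodM (fun j => (a j).toMeasure)).map (piMap hm),
    MeasureTheory.Measure.isProbabilityMeasure_map (piMap_measurable hm).aemeasurable⟩

lemma fMap_toMeasure (hm : 0 < m) (a : ℕ → ProbabilityMeasure (Fin m → Fin A)) :
    (fMap hm a).toMeasure =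
      haveI : ∀ j, IsProbabilityMeasure ((fun j => (a j).toMeasure) j) := fun j => inferInstance
      (prodM (fun j => (a j).toMeasure)).map (piMap hm) := rfl

lemma fMap_cyl (hm : 0 < m) (a : ℕ → ProbabilityMeasure (Fin m → Fin A)) (N : ℕ)
    (y₀ : ℕ → Fin A) :
    (fMap hm a).toMeasure (cyl (N * m) y₀) =
      ∏ j ∈ Finset.range N, (a j).toMeasure {blocks (m := m) y₀ j} := by
  haveI : ∀ j, IsProbabilityMeasure ((fun j => (a j).toMeasure) j) := fun j => inferInstance
  rw [fMap_toMeasure, Measure.map_apply (piMap_measurable hm) (measurableSet_cyl _ _),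
    piMap_preimage_cyl hm N y₀, prodM_cyl]
  rfl

lemma fMap_bcyl (hm : 0 < m) (a : ℕ → ProbabilityMeasure (Fin m → Fin A)) (N : ℕ)
    (c : Fin N → (Fin m → Fin A)) :
    (fMap hm a).toMeasure (bcylSet N c) = ∏ j : Fin N, (a j).toMeasure {c j} := by
  haveI : ∀ j, IsProbabilityMeasure ((fun j => (a j).toMeasure) j) := fun j => inferInstance
  rw [fMap_toMeasure, Measure.map_apply (piMap_measurable hm) (measurableSet_bcylSet N c),
    piMap_preimage_bcyl hm N c, prodM_cyl]
  show ∏ j ∈ Finset.range N, (a j).toMeasure {ext N c j} = _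
  rw [Finset.prod_range fun j => (a j).toMeasure {ext N c j}]
  apply Finset.prod_congr rfl
  intro j _
  congr 1
  rw [ext_lt c j.isLt]

end FMap

section Equivariance

variable {A m : ℕ} [NeZero A]

/-- Prepend a block to a sequence. -/
noncomputable def glue (s : Fin m → Fin A) (y₀ : ℕ → Fin A) : ℕ → Fin A :=
  fun i => if h : i < m then s ⟨i, h⟩ else y₀ (i - m)

lemma shift_preimage_cyl (hm : 0 < m) (N : ℕ) (y₀ : ℕ → Fin A) :
    (fun (y : ℕ → Fin A) (i : ℕ) => y (i + m)) ⁻¹' (cyl (N * m) y₀) =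
      ⋃ s : Fin m → Fin A, cyl ((N + 1) * m) (glue s y₀) := by
  ext y
  simp only [mem_preimage, mem_iUnion]
  constructor
  · intro hy
    refine ⟨fun i => y i, fun i hi => ?_⟩
    by_cases h : i < m
    · rw [glue, dif_pos h]
    · rw [glue, dif_neg h]
      have him : i - m + m = i := Nat.sub_add_cancel (Nat.le_of_not_lt h)
      have hlt : i - m < N * m := by
        have : i < N * m + m := by rw [← Nat.succ_mul]; exact hi
        omega
      have hcalc : y (i - m + m) = y₀ (i - m) := hy (i - m) hlt
      rwa [him] at hcalc
  · rintro ⟨s, hs⟩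
    intro i hi
    have h1 : i + m < (N + 1) * m := by rw [Nat.succ_mul]; omega
    have := hs (i + m) h1
    rw [glue, dif_neg (by omega : ¬ i + m < m)] at this
    simpa using this

lemma blocks_glue_zero (hm : 0 < m) (s : Fin m → Fin A) (y₀ : ℕ → Fin A) :
    blocks (m := m) (glue s y₀) 0 = s := by
  funext i
  show glue s y₀ (0 * m + i) = s i
  rw [zero_mul, zero_add, glue, dif_pos i.isLt]

lemma blocks_glue_succ (hm : 0 < m) (s : Fin m → Fin A) (y₀ : ℕ → Fin A) (j : ℕ) :
    blocks (m := m) (glue s y₀) (j + 1) = blocks (m := m) y₀ j := by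
  funext i
  show glue s y₀ ((j + 1) * m + i) = y₀ (j * m + i)
  rw [glue, dif_neg (by nlinarith [i.isLt, Nat.succ_mul j m] : ¬ (j + 1) * m + (i : ℕ) < m)]
  congr 1
  rw [Nat.succ_mul]
  omega

lemma glue_injective_on_cyl (hm : 0 < m) (N : ℕ) (y₀ : ℕ → Fin A) :
    Pairwise fun s s' : Fin m → Fin A =>
      Disjoint (cyl ((N + 1) * m) (glue s y₀)) (cyl ((N + 1) * m) (glue s' y₀)) := by
  intro s s' hss
  rw [Set.disjoint_left]
  intro y hy hy'
  apply hss
  funext i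
  have hi : (i : ℕ) < (N + 1) * m := lt_of_lt_of_le i.isLt (by nlinarith)
  have h1 := hy i hi
  have h2 := hy' i hi
  rw [glue, dif_pos i.isLt] at h1 h2
  simp only [Fin.eta] at h1 h2
  rw [← h1, h2]

end Equivariance

section Inj

variable {S : Type} [Fintype S] [Nonempty S] [TopologicalSpace S] [DiscreteTopology S]
  [MeasurableSpace S] [DiscreteMeasurableSpace S] [BorelSpace S]

lemma sum_prod_fin {M : Type*} [CommSemiring M] (n : ℕ) (g : Fin n → S → M) :
    ∑ w : Fin n → S, ∏ j, g j (w j) = ∏ j, ∑ s, g j s := by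
  induction n with
  | zero => simp
  | succ n ih =>
    rw [sum_snoc (S := S) n (fun w => ∏ j, g j (w j))]
    have hterm : ∀ (u : Fin n → S) (s : S),
        ∏ j, g j ((Fin.snoc u s : Fin (n+1) → S) j) =
          (∏ j : Fin n, g j.castSucc (u j)) * g (Fin.last n) s := by
      intro u s
      rw [Fin.prod_univ_castSucc]
      congr 1
      · exact Finset.prod_congr rfl fun j _ => by rw [Fin.snoc_castSucc]
      · rw [Fin.snoc_last]
    simp_rw [hterm]
    rw [← Finset.sum_mul_sum, ih (fun j => g j.castSucc),
      Fin.prod_univ_castSucc (f := fun j : Fin (n+1) => ∑ s, g j s)]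

end Inj

section SingletonExt

variable {S : Type} [Fintype S] [MeasurableSpace S] [DiscreteMeasurableSpace S]

lemma measure_ext_singleton' {μ μ' : Measure S} (h : ∀ s : S, μ {s} = μ' {s}) : μ = μ' := by
  ext t _
  have e : ∀ κ : Measure S, κ t = ∑ s ∈ (Set.toFinite t).toFinset, κ {s} := by
    intro κ
    have hs := sum_measure_preimage_singleton (μ := κ) ((Set.toFinite t).toFinset) (f := id)
      (fun _ _ => MeasurableSet.of_discrete)
    simp only [preimage_id] at hs
    rw [Set.Finite.coe_toFinset] at hs
    exact hs.symm
  rw [e μ, e μ']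
  exact Finset.sum_congr rfl fun s _ => h s

lemma probabilityMeasure_ext_singleton {μ μ' : ProbabilityMeasure S}
    (h : ∀ s : S, μ {s} = μ' {s}) : μ = μ' := by
  apply ProbabilityMeasure.toMeasure_injective
  apply measure_ext_singleton'
  intro s
  have := congrArg (fun x : ℝ≥0 => (x : ℝ≥0∞)) (h s)
  simpa [ProbabilityMeasure.ennreal_coeFn_eq_coeFn_toMeasure] using this

end SingletonExt

section Eval

variable {S : Type} [Fintype S] [Nonempty S] [TopologicalSpace S] [DiscreteTopology S]
  [MeasurableSpace S] [DiscreteMeasurableSpace S] [BorelSpace S]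

lemma continuous_eval_singleton (s : S) :
    Continuous fun μ : ProbabilityMeasure S => μ {s} := by
  rw [continuous_iff_continuousAt]
  intro μ0
  have hcont := (ProbabilityMeasure.tendsto_iff_forall_lintegral_tendsto
    (μs := (id : ProbabilityMeasure S → ProbabilityMeasure S)) (μ := μ0)
    (F := nhds μ0)).mp Filter.tendsto_id
  set g : BoundedContinuousFunction S ℝ≥0 :=
    BoundedContinuousFunction.mkOfCompact
      ⟨fun x => Set.indicator {s} (fun _ => 1) x, continuous_of_discreteTopology⟩ with hgdef
  have hg := hcont g
  have hlint : ∀ κ : ProbabilityMeasure S, ∫⁻ x, (g x : ℝ≥0∞) ∂(κ : Measure S) =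
      (κ : Measure S) {s} := by
    intro κ
    have hx : ∀ x : S, ((g x : ℝ≥0) : ℝ≥0∞) = Set.indicator {s} (fun _ => (1 : ℝ≥0∞)) x := by
      intro x
      by_cases hxs : x ∈ ({s} : Set S) <;>
        simp [hgdef, Set.indicator_apply, hxs]
    simp_rw [hx]
    rw [lintegral_indicator MeasurableSet.of_discrete, setLIntegral_const, one_mul]
  simp_rw [hlint] at hg
  exact (ENNReal.tendsto_toNNReal (measure_ne_top _ _)).comp hg

end Eval

section Trunc

variable {A m : ℕ} [NeZero A]

noncomputable def ybase (hm : 0 < m) : ℕ → Fin A :=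
  piMap hm (fun _ => Classical.arbitrary (Fin m → Fin A))

noncomputable def trunc (hm : 0 < m) (n : ℕ) (y : ℕ → Fin A) : ℕ → Fin A :=
  fun i => if i < n * m then y i else ybase hm i

lemma trunc_continuous (hm : 0 < m) (n : ℕ) : Continuous (trunc (A := A) hm n) := by
  apply continuous_pi
  intro i
  by_cases h : i < n * m
  · simp only [trunc, if_pos h]
    exact continuous_apply i
  · simp only [trunc, if_neg h]
    exact continuous_const

lemma trunc_agree (hm : 0 < m) (n : ℕ) (y : ℕ → Fin A) {k : ℕ} (hk : k < n * m) :
    trunc hm n y k = y k := if_pos hk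

lemma trunc_piMap (hm : 0 < m) (n : ℕ) (x : ℕ → (Fin m → Fin A)) :
    trunc hm n (piMap hm x) = piMap hm (ext n (restr n x)) := by
  funext i
  by_cases h : i < n * m
  · rw [trunc_agree hm n _ h, piMap_apply, piMap_apply]
    have hdiv : i / m < n := (Nat.div_lt_iff_lt_mul hm).mpr h
    rw [ext_lt _ hdiv]
    rfl
  · simp only [trunc, if_neg h, ybase, piMap_apply]
    have hdiv : ¬ i / m < n := fun hc => h ((Nat.div_lt_iff_lt_mul hm).mp hc)
    rw [ext_ge _ hdiv]

lemma unif_approx (g : BoundedContinuousFunction (ℕ → Fin A) ℝ≥0) {ε : ℝ} (hε : 0 < ε) :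
    ∃ n₀ : ℕ, ∀ y y' : ℕ → Fin A, (∀ k < n₀, y k = y' k) → dist (g y) (g y') ≤ ε := by
  by_contra hcon
  push_neg at hcon
  choose y y' hagree hdist using hcon
  obtain ⟨z, hz⟩ := exists_diag_mem (S := Fin A)
    (C := {p : (ℕ → Fin A) × (ℕ → Fin A) | ε ≤ dist (g p.1) (g p.2)})
    (isClosed_le continuous_const
      ((g.continuous.comp continuous_fst).dist (g.continuous.comp continuous_snd)))
    (fun n => (y n, y' n)) (fun n => le_of_lt (hdist n)) (fun n k hk => hagree n k hk)
  simp only [mem_setOf_eq, dist_self] at hz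
  linarith

lemma lintegral_trunc (hm : 0 < m) (a : ℕ → ProbabilityMeasure (Fin m → Fin A))
    (g : BoundedContinuousFunction (ℕ → Fin A) ℝ≥0) (n : ℕ) :
    ∫⁻ y, (g (trunc hm n y) : ℝ≥0∞) ∂(fMap hm a).toMeasure
      = ∑ w : Fin n → (Fin m → Fin A), (g (piMap hm (ext n w)) : ℝ≥0∞)
          * ∏ j : Fin n, (a j).toMeasure {w j} := by
  haveI : ∀ j, IsProbabilityMeasure ((fun j => (a j).toMeasure) j) := fun j => inferInstance
  have hG : Measurable fun y : ℕ → Fin A => (g (trunc hm n y) : ℝ≥0∞) :=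
    measurable_coe_nnreal_ennreal.comp
      ((g.continuous.comp (trunc_continuous hm n)).measurable)
  rw [fMap_toMeasure, lintegral_map hG (piMap_measurable hm)]
  have hpt : ∀ x : ℕ → (Fin m → Fin A),
      (g (trunc hm n (piMap hm x)) : ℝ≥0∞) = ∑ w : Fin n → (Fin m → Fin A),
        (cyl n (ext n w)).indicator (fun _ => (g (piMap hm (ext n w)) : ℝ≥0∞)) x := by
    intro x
    rw [Finset.sum_eq_single (restr n x)]
    · rw [indicator_of_mem (mem_cyl_ext_iff.mpr rfl), trunc_piMap]
    · intro w _ hw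
      exact indicator_of_notMem (fun hmem => absurd (mem_cyl_ext_iff.mp hmem).symm hw) _
    · intro habs
      exact absurd (Finset.mem_univ _) habs
  simp_rw [hpt]
  rw [lintegral_finset_sum _
    (fun w _ => Measurable.indicator measurable_const (measurableSet_cyl _ _))]
  apply Finset.sum_congr rfl
  intro w _
  rw [lintegral_indicator (measurableSet_cyl _ _), setLIntegral_const, prodM_cyl]
  congr 1
  show (∏ j ∈ Finset.range n, (a j).toMeasure {ext n w j}) = _
  rw [Finset.prod_range fun j => (a j).toMeasure {ext n w j}]
  apply Finset.prod_congr rfl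
  intro j _
  congr 1
  rw [ext_lt w j.isLt]

end Trunc

end BSE



open BSE Set in

/-- For the full shift on `A` symbols and block length `m`, the map sending a sequence
of probability vectors on words of length `m` to the corresponding product measure on
`𝒜^ℕ` (via the concatenation identification) is a continuous injective map intertwining
the shift on `(Δ_{A^m})^ℕ` with `σ_*^m`. The map is characterized on cylinders:
`f(a)` of the cylinder with prescribed first `N` blocks `c₁,…,c_N` equals `∏ⱼ aⱼ({cⱼ})`. -/
theorem block_simplex_embedding (A m : ℕ) (hA : 2 ≤ A) (hm : 1 ≤ m) :
    ∃ f : (ℕ → ProbabilityMeasure (Fin m → Fin A)) → ProbabilityMeasure (ℕ → Fin A),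
      -- f a is the push-forward under concatenation of the product measure
      (∀ (a : ℕ → ProbabilityMeasure (Fin m → Fin A)) (N : ℕ)
          (c : Fin N → (Fin m → Fin A)),
        (f a) {y : ℕ → Fin A | ∀ (j : Fin N) (i : Fin m), y ((j : ℕ) * m + i) = c j i}
          = ∏ j : Fin N, a j {c j}) ∧
      Continuous f ∧
      Function.Injective f ∧
      -- equivariance: f ∘ σ'' = σ_*^m ∘ f
      (∀ a : ℕ → ProbabilityMeasure (Fin m → Fin A),
        f (fun j => a (j + 1))
          = (f a).map (f := fun (y : ℕ → Fin A) (i : ℕ) => y (i + m))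
              (measurable_pi_lambda _ (fun i => measurable_pi_apply (i + m))).aemeasurable) := by
  haveI : NeZero A := ⟨by omega⟩
  have hm' : 0 < m := hm
  refine ⟨fMap hm', ?_, ?_, ?_, ?_⟩
  -- cylinder formula
  case refine_1 =>
    intro a N c
    show fMap hm' a (bcylSet N c) = ∏ j : Fin N, a j {c j}
    rw [← ENNReal.coe_inj, ProbabilityMeasure.ennreal_coeFn_eq_coeFn_toMeasure,
      ENNReal.coe_finset_prod]
    simp_rw [ProbabilityMeasure.ennreal_coeFn_eq_coeFn_toMeasure]
    exact fMap_bcyl hm' a N c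
  -- continuity
  case refine_2 =>
    rw [continuous_iff_continuousAt]
    intro a
    show Filter.Tendsto (fMap hm') (nhds a) (nhds (fMap hm' a))
    rw [ProbabilityMeasure.tendsto_iff_forall_lintegral_tendsto]
    intro g
    set F : (ℕ → ProbabilityMeasure (Fin m → Fin A)) → ℝ≥0∞ :=
      fun b => ∫⁻ y, (g y : ℝ≥0∞) ∂(fMap hm' b).toMeasure with hF
    obtain ⟨C, hC⟩ := g.bounded
    have hC0 : (0 : ℝ) ≤ C := le_trans dist_nonneg (hC (ybase hm') (ybase hm'))
    set Cb : ℝ≥0 := g (ybase hm') + Real.toNNReal C with hCb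
    have hgle : ∀ y, g y ≤ Cb := by
      intro y
      rw [← NNReal.coe_le_coe, hCb, NNReal.coe_add, Real.coe_toNNReal _ hC0]
      have h' := abs_sub_le_iff.mp
        (((NNReal.dist_eq (g y) (g (ybase hm'))).symm).trans_le (hC y (ybase hm')))
      linarith [h'.1]
    have hfin : ∀ b, F b ≠ ⊤ := by
      intro b
      have hb : F b ≤ (Cb : ℝ≥0∞) * 1 := by
        rw [hF]
        calc ∫⁻ y, (g y : ℝ≥0∞) ∂(fMap hm' b).toMeasure
            ≤ ∫⁻ _, (Cb : ℝ≥0∞) ∂(fMap hm' b).toMeasure := by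
              apply lintegral_mono
              intro y
              rw [ENNReal.coe_le_coe]
              exact hgle y
          _ = (Cb : ℝ≥0∞) * 1 := by
              rw [lintegral_const, measure_univ]
      exact (hb.trans_lt (by simp [lt_top_iff_ne_top])).ne
    set Gn : ℕ → (ℕ → ProbabilityMeasure (Fin m → Fin A)) → ℝ≥0 := fun n b =>
      ∑ w : Fin n → (Fin m → Fin A),
        g (piMap hm' (ext n w)) * ∏ j : Fin n, b j {w j} with hGn
    have hGcont : ∀ n, Continuous (Gn n) := by
      intro n
      apply continuous_finset_sum
      intro w _
      exact continuous_const.mul (continuous_finset_prod _ fun j _ =>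
        (continuous_eval_singleton (w j)).comp
          (continuous_apply (A := fun _ : ℕ => ProbabilityMeasure (Fin m → Fin A)) (j : ℕ)))
    have hGlift : ∀ n b, (Gn n b : ℝ≥0∞) =
        ∫⁻ y, (g (trunc hm' n y) : ℝ≥0∞) ∂(fMap hm' b).toMeasure := by
      intro n b
      rw [lintegral_trunc hm' b g n, hGn, ENNReal.coe_finset_sum]
      apply Finset.sum_congr rfl
      intro w _
      rw [ENNReal.coe_mul, ENNReal.coe_finset_prod]
      congr 1
      exact Finset.prod_congr rfl fun j _ =>
        ProbabilityMeasure.ennreal_coeFn_eq_coeFn_toMeasure _ _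
    have hc : Continuous fun b => (F b).toNNReal := by
      have hunif : TendstoUniformly Gn (fun b => (F b).toNNReal) Filter.atTop := by
        rw [Metric.tendstoUniformly_iff]
        intro ε hε
        obtain ⟨n₀, hn₀⟩ := unif_approx g (half_pos hε)
        rw [Filter.eventually_atTop]
        refine ⟨n₀, fun n hn b => ?_⟩
        have hagree : ∀ y : ℕ → Fin A, dist (g y) (g (trunc hm' n y)) ≤ ε / 2 := by
          intro y
          apply hn₀
          intro k hk
          have hkn : k < n * m := lt_of_lt_of_le (lt_of_lt_of_le hk hn)
            (Nat.le_mul_of_pos_right n hm')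
          exact (trunc_agree hm' n y hkn).symm
        set εn : ℝ≥0 := Real.toNNReal (ε / 2) with hεn
        have hcoe : (εn : ℝ) = ε / 2 := Real.coe_toNNReal _ (le_of_lt (half_pos hε))
        have hpt1 : ∀ y, (g y : ℝ≥0∞) ≤ (g (trunc hm' n y) : ℝ≥0∞) + (εn : ℝ≥0∞) := by
          intro y
          rw [← ENNReal.coe_add, ENNReal.coe_le_coe, ← NNReal.coe_le_coe,
            NNReal.coe_add, hcoe]
          have := abs_sub_le_iff.mp (le_of_eq (NNReal.dist_eq (g y) (g (trunc hm' n y))).symm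
            |>.trans (hagree y))
          linarith [this.1]
        have hpt2 : ∀ y, (g (trunc hm' n y) : ℝ≥0∞) ≤ (g y : ℝ≥0∞) + (εn : ℝ≥0∞) := by
          intro y
          rw [← ENNReal.coe_add, ENNReal.coe_le_coe, ← NNReal.coe_le_coe,
            NNReal.coe_add, hcoe]
          have := abs_sub_le_iff.mp (le_of_eq (NNReal.dist_eq (g y) (g (trunc hm' n y))).symm
            |>.trans (hagree y))
          linarith [this.2]
        have hle1 : F b ≤ (Gn n b : ℝ≥0∞) + (εn : ℝ≥0∞) := by
          rw [hGlift n b]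
          calc F b ≤ ∫⁻ y, ((g (trunc hm' n y) : ℝ≥0∞) + (εn : ℝ≥0∞))
                ∂(fMap hm' b).toMeasure := lintegral_mono fun y => hpt1 y
            _ = (∫⁻ y, (g (trunc hm' n y) : ℝ≥0∞) ∂(fMap hm' b).toMeasure)
                + (εn : ℝ≥0∞) := by
              rw [lintegral_add_right _ measurable_const, lintegral_const,
                measure_univ, mul_one]
        have hle2 : (Gn n b : ℝ≥0∞) ≤ F b + (εn : ℝ≥0∞) := by
          rw [hGlift n b]
          calc ∫⁻ y, (g (trunc hm' n y) : ℝ≥0∞) ∂(fMap hm' b).toMeasure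
              ≤ ∫⁻ y, ((g y : ℝ≥0∞) + (εn : ℝ≥0∞)) ∂(fMap hm' b).toMeasure :=
                lintegral_mono fun y => hpt2 y
            _ = F b + (εn : ℝ≥0∞) := by
              rw [lintegral_add_right _ measurable_const, lintegral_const,
                measure_univ, mul_one]
        have h1 : ((F b).toNNReal : ℝ) ≤ (Gn n b : ℝ) + ε / 2 := by
          have := ENNReal.toReal_mono (by simp [ENNReal.add_ne_top]) hle1
          rwa [ENNReal.toReal_add ENNReal.coe_ne_top ENNReal.coe_ne_top,
            ENNReal.coe_toReal, ENNReal.coe_toReal, hcoe] at this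
        have h2 : (Gn n b : ℝ) ≤ ((F b).toNNReal : ℝ) + ε / 2 := by
          have := ENNReal.toReal_mono (by simp [ENNReal.add_ne_top, hfin b]) hle2
          rwa [ENNReal.toReal_add (hfin b) ENNReal.coe_ne_top,
            ENNReal.coe_toReal, ENNReal.coe_toReal, hcoe] at this
        calc dist ((F b).toNNReal) (Gn n b)
            = |((F b).toNNReal : ℝ) - (Gn n b : ℝ)| := NNReal.dist_eq _ _
          _ ≤ ε / 2 := abs_sub_le_iff.mpr ⟨by linarith, by linarith⟩
          _ < ε := by linarith
      exact hunif.continuous (Filter.Frequently.of_forall hGcont)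
    have h1 : Filter.Tendsto (fun b => (((F b).toNNReal : ℝ≥0) : ℝ≥0∞)) (nhds a)
        (nhds (((F a).toNNReal : ℝ≥0) : ℝ≥0∞)) :=
      (ENNReal.continuous_coe.comp hc).tendsto a
    rw [ENNReal.coe_toNNReal (hfin a)] at h1
    exact (Filter.tendsto_congr fun b => ENNReal.coe_toNNReal (hfin b)).mp h1
  -- injectivity
  case refine_3 =>
    intro a a' h
    have hprod : ∀ (N : ℕ) (c : Fin N → (Fin m → Fin A)),
        (∏ j : Fin N, (a j).toMeasure {c j}) = ∏ j : Fin N, (a' j).toMeasure {c j} := by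
      intro N c
      rw [← fMap_bcyl hm' a N c, ← fMap_bcyl hm' a' N c, h]
    have hsum1 : ∀ (b : ℕ → ProbabilityMeasure (Fin m → Fin A)) (j : ℕ),
        ∑ s : Fin m → Fin A, (b j).toMeasure {s} = 1 := by
      intro b j
      haveI : ∀ i, IsProbabilityMeasure ((fun i => (b i).toMeasure) i) := fun i => (b i).2
      exact sum_singleton_eq_one (fun i => (b i).toMeasure) j
    funext n
    apply probabilityMeasure_ext_singleton
    intro s
    rw [← ENNReal.coe_inj, ProbabilityMeasure.ennreal_coeFn_eq_coeFn_toMeasure,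
      ProbabilityMeasure.ennreal_coeFn_eq_coeFn_toMeasure]
    have key : ∀ b : ℕ → ProbabilityMeasure (Fin m → Fin A),
        (b n).toMeasure {s} = ∑ w : Fin n → (Fin m → Fin A),
          ∏ j : Fin (n + 1), (b j).toMeasure {(Fin.snoc w s : Fin (n+1) → Fin m → Fin A) j} := by
      intro b
      have hterm : ∀ w : Fin n → (Fin m → Fin A),
          ∏ j : Fin (n + 1), (b j).toMeasure {(Fin.snoc w s : Fin (n+1) → Fin m → Fin A) j}
            = (∏ j : Fin n, (b j).toMeasure {w j}) * (b n).toMeasure {s} := by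
        intro w
        rw [Fin.prod_univ_castSucc]
        congr 1
        · apply Finset.prod_congr rfl
          intro j _
          rw [Fin.snoc_castSucc]
          rfl
        · rw [Fin.snoc_last]
          rfl
      simp_rw [hterm]
      rw [← Finset.sum_mul,
        sum_prod_fin (S := Fin m → Fin A) n (fun j t => (b j).toMeasure {t})]
      simp_rw [hsum1 b]
      rw [Finset.prod_const_one, one_mul]
    rw [key a, key a']
    exact Finset.sum_congr rfl fun w _ => hprod (n + 1) (Fin.snoc w s)
  -- equivariance
  case refine_4 =>
    intro a
    apply ProbabilityMeasure.toMeasure_injective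
    rw [ProbabilityMeasure.toMeasure_map]
    haveI : IsProbabilityMeasure ((fMap hm' a).toMeasure.map
        (fun (y : ℕ → Fin A) (i : ℕ) => y (i + m))) :=
      Measure.isProbabilityMeasure_map
        (measurable_pi_lambda _ (fun i => measurable_pi_apply (i + m))).aemeasurable
    apply measure_ext_cyl (φ := fun N => N * m)
      (fun k => ⟨k, Nat.le_mul_of_pos_right k hm'⟩)
    intro N y₀
    rw [fMap_cyl hm' _ N y₀,
      Measure.map_apply (measurable_pi_lambda _ (fun i => measurable_pi_apply (i + m)))
        (measurableSet_cyl _ _),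
      shift_preimage_cyl hm' N y₀,
      measure_iUnion (glue_injective_on_cyl hm' N y₀) (fun _ => measurableSet_cyl _ _),
      tsum_fintype]
    have hterm : ∀ s₁ : Fin m → Fin A,
        (fMap hm' a).toMeasure (cyl ((N + 1) * m) (glue s₁ y₀))
          = (∏ j ∈ Finset.range N, (a (j + 1)).toMeasure {blocks (m := m) y₀ j})
            * (a 0).toMeasure {s₁} := by
      intro s₁
      rw [fMap_cyl hm' a (N + 1) (glue s₁ y₀), Finset.prod_range_succ']
      congr 1
      · apply Finset.prod_congr rfl
        intro j _
        rw [blocks_glue_succ hm']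
      · rw [blocks_glue_zero hm']
    simp_rw [hterm]
    rw [← Finset.mul_sum]
    haveI : ∀ i, IsProbabilityMeasure ((fun i => (a i).toMeasure) i) := fun i => inferInstance
    rw [sum_singleton_eq_one (fun i => (a i).toMeasure) 0, mul_one]
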